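/- Assume y − y^δ ∈ N_1, T*y ≠ 0, x† satisfies the source condition of order μ, and let α* be a minimizer of α ↦ ψ_QO(α, y^δ) over (0,‖T‖²). Then there exist constants C > 0 and η₀ > 0 such that ‖x_{α*}^δ − x†‖ ≤ C η^{(2μ/(2μ+2p+1))·μ} whenever η ≤ η₀. -/

import Mathlib

open scoped BigOperators
open Set

noncomputable section

namespace WeakNoise

/-! ### Sequence (spectral/diagonal) model of the weakly bounded noise setting

Since `T : X → Y` is a compact linear operator, `T T*` and `T* T` have a common
sequence of positive eigenvalues `lam i`, bounded by `Λ = ‖T‖²`, with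
orthonormal eigenbases `u i` (of `T T*`, spanning `closure (range T)`) and
`v i` (of `T* T`, spanning `(ker T)ᗮ`).  We describe all data by their spectral
coefficients: `e i = ⟪y^δ - y, u i⟫` (so `y - y^δ` has coefficients `-e i`,
with the same squares), and `xdag i = ⟪x†, v i⟫` (note `x† ⟂ ker T`), so that
the exact data `y = T x†` has coefficients `√(lam i) * xdag i`.  All norms,
functionals and conditions of the paper are expressed through their spectral
representations `∫ w(λ) d‖F_λ z‖² = ∑' i, w (lam i) * (coefficient of z at i)²`. -/

/-- squared weak noise level `η² = ‖(T T*)^p (y^δ - y)‖² = ∑ λᵢ^{2p} eᵢ²`. -/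
def etaSq (lam e : ℕ → ℝ) (p : ℝ) : ℝ := ∑' i, lam i ^ (2 * p) * e i ^ 2

/-- weak noise level `η = ‖(T T*)^p (y^δ - y)‖`. -/
def eta (lam e : ℕ → ℝ) (p : ℝ) : ℝ := Real.sqrt (etaSq lam e p)

/-- `‖x_α^δ - x_α‖² = ∑ λᵢ eᵢ²/(λᵢ+α)²`. -/
def dataErrSq (lam e : ℕ → ℝ) (α : ℝ) : ℝ := ∑' i, lam i * e i ^ 2 / (lam i + α) ^ 2

/-- `‖x_α^δ - x_α‖`. -/
def dataErr (lam e : ℕ → ℝ) (α : ℝ) : ℝ := Real.sqrt (dataErrSq lam e α)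

/-- `‖x_α - x†‖² = ∑ α² xdagᵢ²/(λᵢ+α)²`. -/
def approxErrSq (lam xdag : ℕ → ℝ) (α : ℝ) : ℝ := ∑' i, α ^ 2 * xdag i ^ 2 / (lam i + α) ^ 2

/-- `‖x_α - x†‖`. -/
def approxErr (lam xdag : ℕ → ℝ) (α : ℝ) : ℝ := Real.sqrt (approxErrSq lam xdag α)

/-- `‖T (x_α^δ - x_α)‖² = ∑ λᵢ² eᵢ²/(λᵢ+α)²`. -/
def TdataErrSq (lam e : ℕ → ℝ) (α : ℝ) : ℝ := ∑' i, lam i ^ 2 * e i ^ 2 / (lam i + α) ^ 2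

/-- `‖T (x_α^δ - x_α)‖`. -/
def TdataErr (lam e : ℕ → ℝ) (α : ℝ) : ℝ := Real.sqrt (TdataErrSq lam e α)

/-- `‖T x_α - y‖² = ∑ α² λᵢ xdagᵢ²/(λᵢ+α)²`. -/
def TapproxErrSq (lam xdag : ℕ → ℝ) (α : ℝ) : ℝ :=
  ∑' i, α ^ 2 * lam i * xdag i ^ 2 / (lam i + α) ^ 2

/-- `‖T x_α - y‖`. -/
def TapproxErr (lam xdag : ℕ → ℝ) (α : ℝ) : ℝ := Real.sqrt (TapproxErrSq lam xdag α)

/-- `‖x_α^δ - x†‖² = ∑ (√λᵢ eᵢ - α xdagᵢ)²/(λᵢ+α)²`. -/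
def totalErrSq (lam xdag e : ℕ → ℝ) (α : ℝ) : ℝ :=
  ∑' i, (Real.sqrt (lam i) * e i - α * xdag i) ^ 2 / (lam i + α) ^ 2

/-- `‖x_α^δ - x†‖`. -/
def totalErr (lam xdag e : ℕ → ℝ) (α : ℝ) : ℝ := Real.sqrt (totalErrSq lam xdag e α)

/-- spectral coefficients of the exact data `y = T x†`. -/
def yCoeff (lam xdag : ℕ → ℝ) : ℕ → ℝ := fun i => Real.sqrt (lam i) * xdag i

/-- spectral coefficients of the noisy data `y^δ`. -/
def ydCoeff (lam xdag e : ℕ → ℝ) : ℕ → ℝ := fun i => Real.sqrt (lam i) * xdag i + e i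

/-- squared quasi-optimality functional `ψ_QO(α,z)² = ∑ α² λᵢ cᵢ²/(λᵢ+α)⁴`,
where `c` are the spectral coefficients of `z`. -/
def psiQOsq (lam c : ℕ → ℝ) (α : ℝ) : ℝ := ∑' i, α ^ 2 * lam i * c i ^ 2 / (lam i + α) ^ 4

/-- quasi-optimality functional `ψ_QO(α,z)`. -/
def psiQO (lam c : ℕ → ℝ) (α : ℝ) : ℝ := Real.sqrt (psiQOsq lam c α)

/-- squared modified heuristic discrepancy functional
`ψ_HD(α,z)² = ∑ λᵢ^{2q} α^{1-2q} cᵢ²/(λᵢ+α)²`. -/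
def psiHDsq (lam c : ℕ → ℝ) (q α : ℝ) : ℝ :=
  ∑' i, lam i ^ (2 * q) * α ^ (1 - 2 * q) * c i ^ 2 / (lam i + α) ^ 2

/-- modified heuristic discrepancy functional `ψ_HD(α,z)`. -/
def psiHD (lam c : ℕ → ℝ) (q α : ℝ) : ℝ := Real.sqrt (psiHDsq lam c q α)

/-- squared modified Hanke-Raus functional
`ψ_HR(α,z)² = ∑ λᵢ^{2q} α^{2-2q} cᵢ²/(λᵢ+α)³`. -/
def psiHRsq (lam c : ℕ → ℝ) (q α : ℝ) : ℝ :=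
  ∑' i, lam i ^ (2 * q) * α ^ (2 - 2 * q) * c i ^ 2 / (lam i + α) ^ 3

/-- modified Hanke-Raus functional `ψ_HR(α,z)`. -/
def psiHR (lam c : ℕ → ℝ) (q α : ℝ) : ℝ := Real.sqrt (psiHRsq lam c q α)

/-- squared predictive mean-square error functional
`ψ_PMS(α,y^δ)² = ‖T x_α^δ - y‖² = ∑ (λᵢ eᵢ - α √λᵢ xdagᵢ)²/(λᵢ+α)²`. -/
def psiPMSsq (lam xdag e : ℕ → ℝ) (α : ℝ) : ℝ :=
  ∑' i, (lam i * e i - α * Real.sqrt (lam i) * xdag i) ^ 2 / (lam i + α) ^ 2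

/-- predictive mean-square error functional `ψ_PMS(α,y^δ)`. -/
def psiPMS (lam xdag e : ℕ → ℝ) (α : ℝ) : ℝ := Real.sqrt (psiPMSsq lam xdag e α)

/-- the noise condition defining `N_ν`, with explicit constant `C`:
`α^{ν+1} ∫_α^{‖T‖²} λ⁻¹ d‖F_λ e‖² ≤ C ∫_0^α λ^ν d‖F_λ e‖²` for all `α ∈ (0,‖T‖²)`. -/
def noiseCondC (lam c : ℕ → ℝ) (Λ ν C : ℝ) : Prop :=
  ∀ α ∈ Set.Ioo (0 : ℝ) Λ,
    α ^ (ν + 1) * ∑' i, (if α < lam i then c i ^ 2 / lam i else 0)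
      ≤ C * ∑' i, (if lam i ≤ α then lam i ^ ν * c i ^ 2 else 0)

/-- membership in the noise class `N_ν`. -/
def memN (lam c : ℕ → ℝ) (Λ ν : ℝ) : Prop := ∃ C > 0, noiseCondC lam c Λ ν C

/-- the regularity condition on `x†`:
`α² ∫_α^∞ λ⁻² d‖E_λ x†‖² ≥ C ∫_0^α d‖E_λ x†‖²` for all `α ∈ (0,‖T‖²)`. -/
def regCond (lam xdag : ℕ → ℝ) (Λ : ℝ) : Prop :=
  ∃ C > 0, ∀ α ∈ Set.Ioo (0 : ℝ) Λ,
    C * ∑' i, (if lam i ≤ α then xdag i ^ 2 else 0)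
      ≤ α ^ 2 * ∑' i, (if α < lam i then xdag i ^ 2 / lam i ^ 2 else 0)

/-- the noise condition (regcon) with parameter `ε > 0` and explicit constant `C`:
`∫_α^{‖T‖²} d‖F_λ Q(y-y^δ)‖² ≥ C η²/α^{2p-ε}` for all `α ∈ (0,‖T‖²)`. -/
def regconC (lam e : ℕ → ℝ) (Λ p ε C : ℝ) : Prop :=
  ∀ α ∈ Set.Ioo (0 : ℝ) Λ,
    C * etaSq lam e p / α ^ (2 * p - ε) ≤ ∑' i, (if α < lam i then e i ^ 2 else 0)

/-- condition (xxx) with parameter `ε₂ > 0` and explicit constant `C`: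
`∫_α^{‖T‖²} λ^{2μ-1} d‖E_λ ω‖² ≥ C α^{2μ-1+ε₂}` for all `α ∈ (0,‖T‖²)`. -/
def xxxCondC (lam om : ℕ → ℝ) (Λ mu eps2 C : ℝ) : Prop :=
  ∀ α ∈ Set.Ioo (0 : ℝ) Λ,
    C * α ^ (2 * mu - 1 + eps2) ≤ ∑' i, (if α < lam i then lam i ^ (2 * mu - 1) * om i ^ 2 else 0)



/-! ### Auxiliary lemmas -/

lemma tsum_mono' {f g : ℕ → ℝ} (h0 : ∀ i, 0 ≤ f i) (h : ∀ i, f i ≤ g i)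
    (hg : Summable g) : ∑' i, f i ≤ ∑' i, g i :=
  Summable.tsum_le_tsum h (hg.of_nonneg_of_le h0 h) hg

lemma rpow_two' {x : ℝ} : x ^ (2:ℝ) = x ^ 2 := by
  rw [show (2:ℝ) = ((2:ℕ):ℝ) by norm_num, Real.rpow_natCast]

lemma rpow_four' {x : ℝ} : x ^ (4:ℝ) = x ^ 4 := by
  rw [show (4:ℝ) = ((4:ℕ):ℝ) by norm_num, Real.rpow_natCast]

lemma pdiv {D x y : ℝ} (hD : 0 < D) (h : x ≤ y) : x / D ≤ y / D :=
  div_le_div_of_nonneg_right h hD.le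

/-- P1 : data error pointwise bound -/
lemma P1 {lam α p : ℝ} (hl : 0 < lam) (hα : 0 < α) (hp0 : 0 ≤ p) (hp2 : p ≤ 1/2)
    {e2 : ℝ} (he2 : 0 ≤ e2) :
    lam * e2 / (lam + α) ^ 2 ≤ α ^ (-(1 + 2*p)) * (lam ^ (2*p) * e2) := by
  have hden : (0:ℝ) < (lam + α)^2 := by positivity
  rw [div_le_iff₀ hden]
  have h1 : lam ≤ lam ^ (2*p) * (lam + α) ^ (1 - 2*p) := by
    calc lam = lam ^ (2*p) * lam ^ (1 - 2*p) := by
          rw [← Real.rpow_add hl]; norm_num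
    _ ≤ lam ^ (2*p) * (lam + α) ^ (1 - 2*p) := by
          apply mul_le_mul_of_nonneg_left _ (Real.rpow_nonneg hl.le _)
          exact Real.rpow_le_rpow hl.le (by linarith) (by linarith)
  have h2 : (lam + α) ^ (1 - 2*p) ≤ (lam + α) ^ (2:ℝ) * α ^ (-(1 + 2*p)) := by
    have : (lam + α) ^ (1 - 2*p) = (lam + α) ^ (2:ℝ) * (lam + α) ^ (-(1 + 2*p)) := by
      rw [← Real.rpow_add (by linarith)]; ring_nf
    rw [this]
    apply mul_le_mul_of_nonneg_left _ (Real.rpow_nonneg (by linarith) _)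
    exact Real.rpow_le_rpow_of_nonpos hα (by linarith) (by linarith)
  calc lam * e2 ≤ (lam ^ (2*p) * ((lam + α) ^ (2:ℝ) * α ^ (-(1 + 2*p)))) * e2 := by
        apply mul_le_mul_of_nonneg_right _ he2
        exact h1.trans (mul_le_mul_of_nonneg_left h2 (Real.rpow_nonneg hl.le _))
  _ = α ^ (-(1 + 2*p)) * (lam ^ (2*p) * e2) * (lam + α) ^ 2 := by
        rw [rpow_two']; ring

/-- P2 : approximation error pointwise bound -/
lemma P2 {lam α μ : ℝ} (hl : 0 < lam) (hα : 0 < α) (hμ0 : 0 ≤ μ) (hμ1 : μ ≤ 1)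
    {w2 : ℝ} (hw2 : 0 ≤ w2) :
    α ^ 2 * (lam ^ (2*μ) * w2) / (lam + α) ^ 2 ≤ α ^ (2*μ) * w2 := by
  have hden : (0:ℝ) < (lam + α)^2 := by positivity
  rw [div_le_iff₀ hden]
  have key : α ^ (2:ℝ) * lam ^ (2*μ) ≤ α ^ (2*μ) * (lam + α) ^ (2:ℝ) := by
    calc α ^ (2:ℝ) * lam ^ (2*μ) = α ^ (2*μ) * (α ^ (2 - 2*μ) * lam ^ (2*μ)) := by
          rw [← mul_assoc, ← Real.rpow_add hα]; ring_nf
    _ ≤ α ^ (2*μ) * ((lam + α) ^ (2 - 2*μ) * (lam + α) ^ (2*μ)) := by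
          apply mul_le_mul_of_nonneg_left _ (Real.rpow_nonneg hα.le _)
          apply mul_le_mul (Real.rpow_le_rpow hα.le (by linarith) (by linarith))
            (Real.rpow_le_rpow hl.le (by linarith) (by linarith))
            (Real.rpow_nonneg hl.le _) (Real.rpow_nonneg (by linarith) _)
    _ = α ^ (2*μ) * (lam + α) ^ (2:ℝ) := by rw [← Real.rpow_add (by linarith)]; ring_nf
  rw [rpow_two', rpow_two'] at key
  calc α ^ 2 * (lam ^ (2*μ) * w2) = (α ^ 2 * lam ^ (2*μ)) * w2 := by ring
  _ ≤ (α ^ (2*μ) * (lam + α) ^ 2) * w2 := mul_le_mul_of_nonneg_right key hw2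
  _ = α ^ (2*μ) * w2 * (lam + α) ^ 2 := by ring

/-- P3 : bound for the quasi-optimality functional of the exact data, pointwise -/
lemma P3 {lam α μ : ℝ} (hl : 0 < lam) (hα : 0 < α) (hμ0 : 0 ≤ μ) (hμ1 : μ ≤ 1)
    {w2 : ℝ} (hw2 : 0 ≤ w2) :
    α ^ 2 * lam * (lam * (lam ^ (2*μ) * w2)) / (lam + α) ^ 4 ≤ α ^ (2*μ) * w2 := by
  have hden : (0:ℝ) < (lam + α)^4 := by positivity
  rw [div_le_iff₀ hden]
  have key : α ^ (2:ℝ) * (lam ^ (2:ℝ) * lam ^ (2*μ)) ≤ α ^ (2*μ) * (lam + α) ^ (4:ℝ) := by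
    have a1 : α ^ (2:ℝ) = α ^ (2*μ) * α ^ (2 - 2*μ) := by
      rw [← Real.rpow_add hα]; ring_nf
    have a2 : lam ^ (2:ℝ) * lam ^ (2*μ) = lam ^ (2 + 2*μ) := by
      rw [← Real.rpow_add hl]
    rw [a1, a2, mul_assoc]
    apply mul_le_mul_of_nonneg_left _ (Real.rpow_nonneg hα.le _)
    calc α ^ (2 - 2*μ) * lam ^ (2 + 2*μ)
        ≤ (lam + α) ^ (2 - 2*μ) * (lam + α) ^ (2 + 2*μ) := by
          apply mul_le_mul (Real.rpow_le_rpow hα.le (by linarith) (by linarith))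
            (Real.rpow_le_rpow hl.le (by linarith) (by linarith))
            (Real.rpow_nonneg hl.le _) (Real.rpow_nonneg (by linarith) _)
    _ = (lam + α) ^ (4:ℝ) := by rw [← Real.rpow_add (by linarith)]; ring_nf
  rw [rpow_two', rpow_two', rpow_four'] at key
  calc α ^ 2 * lam * (lam * (lam ^ (2*μ) * w2)) = (α ^ 2 * (lam ^ 2 * lam ^ (2*μ))) * w2 := by
        ring
  _ ≤ (α ^ (2*μ) * (lam + α) ^ 4) * w2 := mul_le_mul_of_nonneg_right key hw2
  _ = α ^ (2*μ) * w2 * (lam + α) ^ 4 := by ring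

/-- P4 : the e-term of the quasi-optimality functional is dominated by the data error term -/
lemma P4 {lam α e2 : ℝ} (hl : 0 < lam) (hα : 0 < α) (he2 : 0 ≤ e2) :
    α ^ 2 * lam * e2 / (lam + α) ^ 4 ≤ lam * e2 / (lam + α) ^ 2 := by
  rw [div_le_div_iff₀ (by positivity) (by positivity)]
  nlinarith [mul_le_mul_of_nonneg_left (show α^2 ≤ (lam+α)^2 by nlinarith)
    (show (0:ℝ) ≤ lam * e2 * (lam+α)^2 by positivity)]

/-- P5 : high-frequency tail pointwise bound -/
lemma P5 {lam β p e2 : ℝ} (hl : 0 < lam) (hβ : 0 < β) (h : β < lam) (hp0 : 0 ≤ p)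
    (he2 : 0 ≤ e2) : e2 / lam ≤ β ^ (-(1 + 2*p)) * (lam ^ (2*p) * e2) := by
  have hh : lam ^ (2*p) * lam ^ (-(1 + 2*p)) = lam⁻¹ := by
    rw [← Real.rpow_add hl, show 2*p + -(1 + 2*p) = -1 by ring, Real.rpow_neg_one]
  have h2 : lam ^ (-(1 + 2*p)) ≤ β ^ (-(1 + 2*p)) :=
    Real.rpow_le_rpow_of_nonpos hβ h.le (by linarith)
  calc e2 / lam = e2 * (lam ^ (2*p) * lam ^ (-(1 + 2*p))) := by rw [hh]; ring
  _ ≤ e2 * (lam ^ (2*p) * β ^ (-(1 + 2*p))) := by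
        apply mul_le_mul_of_nonneg_left _ he2
        exact mul_le_mul_of_nonneg_left h2 (Real.rpow_nonneg hl.le _)
  _ = β ^ (-(1 + 2*p)) * (lam ^ (2*p) * e2) := by ring

/-- λ^{2μ} is bounded -/
lemma lam_rpow_le {lam Λ μ : ℝ} (hl : 0 < lam) (hlΛ : lam ≤ Λ) (hμ0 : 0 ≤ μ) (hμ1 : μ ≤ 1) :
    lam ^ (2*μ) ≤ (max 1 Λ) ^ 2 := by
  have h1 : (1:ℝ) ≤ max 1 Λ := le_max_left _ _
  calc lam ^ (2*μ) ≤ (max 1 Λ) ^ (2*μ) :=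
        Real.rpow_le_rpow hl.le (hlΛ.trans (le_max_right _ _)) (by linarith)
  _ ≤ (max 1 Λ) ^ (2:ℝ) := Real.rpow_le_rpow_of_exponent_le h1 (by linarith)
  _ = (max 1 Λ) ^ 2 := rpow_two'

/-- the QO-terms of the exact data are uniformly dominated -/
lemma Fterm_le {lam a x : ℝ} (hl : 0 < lam) (ha : 0 < a) :
    a^2 * lam * (Real.sqrt lam * x)^2 / (lam + a)^4 ≤ x^2 := by
  rw [mul_pow, Real.sq_sqrt hl.le, div_le_iff₀ (by positivity)]
  have h1 : a^2 ≤ (lam+a)^2 := by nlinarith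
  have h2 : lam^2 ≤ (lam+a)^2 := by nlinarith
  calc a^2*lam*(lam*x^2) = (a^2*lam^2)*x^2 := by ring
  _ ≤ ((lam+a)^2*(lam+a)^2)*x^2 :=
      mul_le_mul_of_nonneg_right (mul_le_mul h1 h2 (by positivity) (by positivity)) (sq_nonneg x)
  _ = x^2*(lam+a)^4 := by ring

/-- triangle-type inequality for sums -/
lemma tsum_tri {f g h : ℕ → ℝ} (h0 : ∀ i, 0 ≤ f i) (hle : ∀ i, f i ≤ 2*g i + 2*h i)
    (hg : Summable g) (hh : Summable h) :
    ∑' i, f i ≤ 2*(∑' i, g i) + 2*(∑' i, h i) := by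
  calc ∑' i, f i ≤ ∑' i, (2*g i + 2*h i) :=
        tsum_mono' h0 hle ((hg.mul_left 2).add (hh.mul_left 2))
  _ = 2*(∑' i, g i) + 2*(∑' i, h i) := by
        rw [Summable.tsum_add (hg.mul_left 2) (hh.mul_left 2), tsum_mul_left, tsum_mul_left]

set_option maxHeartbeats 16000000 in
/-- convergence rate for the quasi-optimality rule. -/
theorem statement3 (Λ p μ : ℝ) (hΛ : 0 < Λ) (hp : p ∈ Set.Icc (0 : ℝ) (1 / 2))
    (hμ : μ ∈ Set.Icc (0 : ℝ) 1)
    (lam xdag ω : ℕ → ℝ) (hlam : ∀ i, 0 < lam i ∧ lam i ≤ Λ)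
    (hsrc : ∀ i, xdag i = lam i ^ μ * ω i) (hω : Summable fun i => ω i ^ 2)
    (hTy : ∃ i, xdag i ≠ 0)
    (CN : ℝ) (hCN : 0 < CN) :
    ∃ C > 0, ∃ η₀ > 0, ∀ e : ℕ → ℝ,
      (Summable fun i => lam i ^ (2 * p) * e i ^ 2) →
      noiseCondC lam e Λ 1 CN →
      eta lam e p ≤ η₀ →
      ∀ αstar ∈ Set.Ioo (0 : ℝ) Λ,
        (∀ α ∈ Set.Ioo (0 : ℝ) Λ,
          psiQO lam (ydCoeff lam xdag e) αstar ≤ psiQO lam (ydCoeff lam xdag e) α) →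
        totalErr lam xdag e αstar ≤ C * eta lam e p ^ ((2 * μ / (2 * μ + 2 * p + 1)) * μ) := by
  obtain ⟨i0, hi0⟩ := hTy
  have hμ0 : 0 ≤ μ := hμ.1
  have hμ1 : μ ≤ 1 := hμ.2
  have hp0 : 0 ≤ p := hp.1
  have hp2 : p ≤ 1/2 := hp.2
  have hl : ∀ i, 0 < lam i := fun i => (hlam i).1
  have hlΛ : ∀ i, lam i ≤ Λ := fun i => (hlam i).2
  set d := 2 * μ + 2 * p + 1 with hd
  have hd0 : 0 < d := by rw [hd]; linarith only [hμ0, hp0]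
  set W := ∑' i, ω i ^ 2 with hWdef
  have hW0 : 0 ≤ W := tsum_nonneg fun i => sq_nonneg _
  have hx2 : ∀ i, xdag i ^ 2 = lam i ^ (2*μ) * ω i ^ 2 := by
    intro i
    rw [hsrc i, mul_pow, ← rpow_two', ← Real.rpow_mul (hl i).le]
    ring_nf
  set c2 := lam i0 ^ 2 * xdag i0 ^ 2 / (lam i0 + Λ) ^ 4 with hc2def
  have hxi0 : 0 < xdag i0 ^ 2 := lt_of_le_of_ne (sq_nonneg _) (Ne.symm (pow_ne_zero 2 hi0))
  have hli0 := hl i0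
  have hc2 : 0 < c2 := by
    rw [hc2def]
    apply div_pos (mul_pos (by positivity) hxi0) (by positivity)
  set K1 := 2 + 2*W with hK1
  have hK10 : 0 ≤ K1 := by rw [hK1]; linarith only [hW0]
  set CE := 4*(1 + 4*CN) with hCE
  have hCE0 : 0 ≤ CE := by rw [hCE]; linarith only [hCN]
  set C3 := max 1 (Real.sqrt ((2*K1 + 2)/c2)) with hC3
  have hC31 : (1:ℝ) ≤ C3 := le_max_left _ _
  have hC3p : (0:ℝ) < C3 ^ (2*μ) := Real.rpow_pos_of_pos (by linarith only [hC31]) _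
  set CF := 4*CE*K1 + (4*CE + 2)*W*C3 ^ (2*μ) with hCF
  have hCF0 : 0 < CF := by
    rw [hCF, hCE, hK1]
    nlinarith only [mul_nonneg hW0 hC3p.le, mul_nonneg (mul_nonneg hCN.le hW0) hC3p.le,
      mul_nonneg hCN.le hW0, hCN, hW0]
  refine ⟨Real.sqrt CF, Real.sqrt_pos.mpr hCF0, min 1 ((Λ/2) ^ (d/2)),
    lt_min one_pos (Real.rpow_pos_of_pos (by linarith only [hΛ]) _), ?_⟩
  intro e hEsum hnoise hsmall β hβmem hmin
  obtain ⟨hβ0, hβΛ⟩ := hβmem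
  -- basic summability and nonnegativity facts
  have hSX : Summable (fun i => xdag i ^ 2) := by
    apply (hω.mul_left ((max 1 Λ)^2)).of_nonneg_of_le (fun i => sq_nonneg _)
    intro i
    rw [hx2 i]
    exact mul_le_mul_of_nonneg_right (lam_rpow_le (hl i) (hlΛ i) hμ0 hμ1) (sq_nonneg _)
  have hEsq0 : 0 ≤ etaSq lam e p := by
    simp only [etaSq]
    exact tsum_nonneg fun i => by have := (hl i).le; positivity
  set η := eta lam e p with hηdef
  have hη0 : 0 ≤ η := Real.sqrt_nonneg _
  have hEs : etaSq lam e p = η ^ 2 := (Real.sq_sqrt hEsq0).symm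
  have hpsinn : ∀ (c : ℕ → ℝ) (a : ℝ), 0 ≤ psiQOsq lam c a := by
    intro c a
    simp only [psiQOsq]
    exact tsum_nonneg fun i => by have := (hl i).le; positivity
  -- e-masters
  have hMe : ∀ a : ℝ, Summable (fun i => a ^ (-(1+2*p)) * (lam i ^ (2*p) * e i ^ 2)) :=
    fun a => hEsum.mul_left _
  have hDsum : ∀ a : ℝ, 0 < a → Summable (fun i => lam i * e i ^ 2 / (lam i + a) ^ 2) := by
    intro a ha
    exact (hMe a).of_nonneg_of_le (fun i => by have := (hl i).le; positivity)
      (fun i => P1 (hl i) ha hp0 hp2 (sq_nonneg _))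
  have hDle : ∀ a : ℝ, 0 < a →
      (∑' i, lam i * e i ^ 2 / (lam i + a) ^ 2) ≤ a ^ (-(1+2*p)) * etaSq lam e p := by
    intro a ha
    simp only [etaSq]
    calc (∑' i, lam i * e i ^ 2 / (lam i + a) ^ 2)
        ≤ ∑' i, a ^ (-(1+2*p)) * (lam i ^ (2*p) * e i ^ 2) :=
          tsum_mono' (fun i => by have := (hl i).le; positivity)
            (fun i => P1 (hl i) ha hp0 hp2 (sq_nonneg _)) (hMe a)
    _ = a ^ (-(1+2*p)) * (∑' i, lam i ^ (2*p) * e i ^ 2) := tsum_mul_left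
  -- ψ-term series for the exact data
  have hyc2 : ∀ i, (yCoeff lam xdag i)^2 = lam i * (lam i ^ (2*μ) * ω i ^ 2) := by
    intro i
    rw [show (yCoeff lam xdag i)^2 = lam i * xdag i ^2 by
      simp [yCoeff, mul_pow, Real.sq_sqrt (hl i).le], hx2 i]
  have hYt : ∀ a : ℝ, 0 < a →
      Summable (fun i => a^2*lam i*(yCoeff lam xdag i)^2/(lam i + a)^4) := by
    intro a ha
    apply (hω.mul_left (a ^ (2*μ))).of_nonneg_of_le
      (fun i => by have := (hl i).le; positivity)
    intro i
    rw [hyc2 i]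
    exact P3 (hl i) ha hμ0 hμ1 (sq_nonneg _)
  have hYle : ∀ a : ℝ, 0 < a → psiQOsq lam (yCoeff lam xdag) a ≤ a ^ (2*μ) * W := by
    intro a ha
    simp only [psiQOsq]
    calc (∑' i, a ^ 2 * lam i * (yCoeff lam xdag i) ^ 2 / (lam i + a) ^ 4)
        ≤ ∑' i, a^(2*μ) * ω i^2 := tsum_mono' (fun i => by have := (hl i).le; positivity)
            (fun i => by rw [hyc2 i]; exact P3 (hl i) ha hμ0 hμ1 (sq_nonneg _))
            (hω.mul_left _)
    _ = a ^ (2*μ) * W := tsum_mul_left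
  -- ψ-term series for the noise
  have hEt : ∀ a : ℝ, 0 < a → Summable (fun i => a^2*lam i*e i^2/(lam i + a)^4) := fun a ha =>
    (hDsum a ha).of_nonneg_of_le (fun i => by have := (hl i).le; positivity)
      (fun i => P4 (hl i) ha (sq_nonneg _))
  have hEle : ∀ a : ℝ, 0 < a → psiQOsq lam e a ≤ a ^ (-(1+2*p)) * etaSq lam e p := by
    intro a ha
    simp only [psiQOsq]
    calc (∑' i, a ^ 2 * lam i * e i ^ 2 / (lam i + a) ^ 4)
        ≤ ∑' i, lam i * e i ^ 2 / (lam i + a)^2 :=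
        tsum_mono' (fun i => by have := (hl i).le; positivity)
          (fun i => P4 (hl i) ha (sq_nonneg _)) (hDsum a ha)
    _ ≤ a ^ (-(1+2*p)) * etaSq lam e p := hDle a ha
  -- generic triangle machinery for the ψ functional
  have htri : ∀ (a : ℝ), 0 < a → ∀ (u v w : ℕ → ℝ),
      (∀ i, (u i)^2 ≤ 2*(v i)^2 + 2*(w i)^2) → ∀ i,
      a^2*lam i*(u i)^2/(lam i+a)^4
        ≤ 2*(a^2*lam i*(v i)^2/(lam i+a)^4) + 2*(a^2*lam i*(w i)^2/(lam i+a)^4) := by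
    intro a ha u v w hk i
    have hD : (0:ℝ) < (lam i + a)^4 := by have := hl i; positivity
    calc a^2*lam i*(u i)^2/(lam i+a)^4
        ≤ (2*(a^2*lam i*(v i)^2) + 2*(a^2*lam i*(w i)^2))/(lam i+a)^4 := by
          apply pdiv hD
          nlinarith only [mul_le_mul_of_nonneg_left (hk i)
            (show (0:ℝ) ≤ a^2*lam i by have := (hl i).le; positivity)]
    _ = 2*(a^2*lam i*(v i)^2/(lam i+a)^4) + 2*(a^2*lam i*(w i)^2/(lam i+a)^4) := by ring
  have hpsiTri : ∀ (a : ℝ), 0 < a → ∀ (u v w : ℕ → ℝ),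
      (∀ i, (u i)^2 ≤ 2*(v i)^2 + 2*(w i)^2) →
      Summable (fun i => a^2*lam i*(v i)^2/(lam i+a)^4) →
      Summable (fun i => a^2*lam i*(w i)^2/(lam i+a)^4) →
      psiQOsq lam u a ≤ 2*psiQOsq lam v a + 2*psiQOsq lam w a := by
    intro a ha u v w hk hv hw
    simp only [psiQOsq]
    refine tsum_tri ?_ (htri a ha u v w hk) hv hw
    intro i
    have := (hl i).le
    positivity
  have k1 : ∀ i, (ydCoeff lam xdag e i)^2 ≤ 2*(yCoeff lam xdag i)^2 + 2*(e i)^2 := by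
    intro i
    simp only [ydCoeff, yCoeff]
    nlinarith only [sq_nonneg (Real.sqrt (lam i)*xdag i - e i)]
  have k2 : ∀ i, (e i)^2 ≤ 2*(ydCoeff lam xdag e i)^2 + 2*(yCoeff lam xdag i)^2 := by
    intro i
    simp only [ydCoeff, yCoeff]
    nlinarith only [sq_nonneg (2*(Real.sqrt (lam i)*xdag i) + e i)]
  have k3 : ∀ i, (yCoeff lam xdag i)^2 ≤ 2*(ydCoeff lam xdag e i)^2 + 2*(e i)^2 := by
    intro i
    simp only [ydCoeff, yCoeff]
    nlinarith only [sq_nonneg (Real.sqrt (lam i)*xdag i + 2*e i)]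
  have hYdsum : ∀ a : ℝ, 0 < a →
      Summable (fun i => a^2*lam i*(ydCoeff lam xdag e i)^2/(lam i + a)^4) := by
    intro a ha
    apply Summable.of_nonneg_of_le (fun i => by have := (hl i).le; positivity)
      (htri a ha _ _ _ k1)
      (((hYt a ha).mul_left 2).add ((hEt a ha).mul_left 2))
  -- minimality in squared form
  have hmin' : ∀ a ∈ Set.Ioo (0:ℝ) Λ,
      psiQOsq lam (ydCoeff lam xdag e) β ≤ psiQOsq lam (ydCoeff lam xdag e) a := by
    intro a ha
    have h1 := hmin a ha
    simp only [psiQO] at h1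
    have h2 := pow_le_pow_left₀ (Real.sqrt_nonneg _) h1 2
    rwa [Real.sq_sqrt (hpsinn _ _), Real.sq_sqrt (hpsinn _ _)] at h2
  -- single-term lower bound for the exact-data functional
  have hFlow : ∀ a : ℝ, 0 < a → a ≤ Λ → c2 * a^2 ≤ psiQOsq lam (yCoeff lam xdag) a := by
    intro a ha haΛ
    simp only [psiQOsq]
    have hterm : c2 * a^2 ≤ a^2*lam i0*(yCoeff lam xdag i0)^2/(lam i0+a)^4 := by
      have hs : (yCoeff lam xdag i0)^2 = lam i0 * xdag i0^2 := by
        simp [yCoeff, mul_pow, Real.sq_sqrt (hl i0).le]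
      rw [hs, hc2def, div_mul_eq_mul_div, div_le_div_iff₀ (by positivity) (by positivity)]
      have hp4 : (lam i0+a)^4 ≤ (lam i0+Λ)^4 :=
        pow_le_pow_left₀ (by positivity) (by linarith only [haΛ]) 4
      nlinarith only [mul_le_mul_of_nonneg_left hp4
        (show (0:ℝ) ≤ lam i0^2*xdag i0^2*a^2 by positivity)]
    exact hterm.trans (Summable.le_tsum (hYt a ha) i0
      (fun j _ => by have := (hl j).le; positivity) :
        _ ≤ ∑' i, a^2*lam i*(yCoeff lam xdag i)^2/(lam i+a)^4)
  by_cases hz : etaSq lam e p = 0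
  · -- degenerate case : exact data, the minimizer cannot exist
    exfalso
    have he0 : ∀ i, e i = 0 := by
      intro i
      have hz' : (∑' i, lam i ^ (2*p) * e i ^ 2) = 0 := by simpa [etaSq] using hz
      have h1 : lam i ^ (2*p) * e i ^ 2 ≤ ∑' i, lam i ^ (2*p) * e i ^ 2 :=
        Summable.le_tsum hEsum i (fun j _ => by have := (hl j).le; positivity)
      rw [hz'] at h1
      have h2 : 0 < lam i ^ (2*p) := Real.rpow_pos_of_pos (hl i) _
      have h3 : e i ^ 2 = 0 := by nlinarith only [sq_nonneg (e i), h1, h2]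
      exact (pow_eq_zero_iff two_ne_zero).mp h3
    have hydy : ∀ (a:ℝ) i, a^2*lam i*(ydCoeff lam xdag e i)^2/(lam i+a)^4
        = a^2*lam i*(yCoeff lam xdag i)^2/(lam i+a)^4 := by
      intro a i; simp [ydCoeff, yCoeff, he0 i]
    have heq : ∀ γ:ℝ, psiQOsq lam (ydCoeff lam xdag e) γ = psiQOsq lam (yCoeff lam xdag) γ := by
      intro γ
      simp only [psiQOsq]
      exact tsum_congr fun i => hydy γ i
    have hT : Filter.Tendsto (fun a => psiQOsq lam (yCoeff lam xdag) a)
        (nhdsWithin 0 (Set.Ioi 0)) (nhds 0) := by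
      simp only [psiQOsq]
      have hab : ∀ k : ℕ, Filter.Tendsto
          (fun a : ℝ => a^2*lam k*(yCoeff lam xdag k)^2/(lam k+a)^4)
          (nhdsWithin 0 (Set.Ioi 0)) (nhds 0) := by
        intro k
        have hc : ContinuousAt (fun a : ℝ => a^2*lam k*(yCoeff lam xdag k)^2/(lam k+a)^4) 0 := by
          apply ContinuousAt.div (by fun_prop) (by fun_prop)
          have := hl k; positivity
        have ht : Filter.Tendsto (fun a : ℝ => a^2*lam k*(yCoeff lam xdag k)^2/(lam k+a)^4)
            (nhds 0) (nhds 0) := by simpa using hc.tendsto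
        exact ht.mono_left nhdsWithin_le_nhds
      have hbd : ∀ᶠ (a:ℝ) in nhdsWithin 0 (Set.Ioi 0), ∀ k,
          ‖a^2*lam k*(yCoeff lam xdag k)^2/(lam k+a)^4‖ ≤ xdag k ^ 2 := by
        filter_upwards [self_mem_nhdsWithin] with a ha k
        have ha0 : (0:ℝ) < a := ha
        rw [Real.norm_of_nonneg (by have := (hl k).le; positivity)]
        simpa [yCoeff] using Fterm_le (lam := lam k) (x := xdag k) (hl k) ha0
      have := tendsto_tsum_of_dominated_convergence
        (𝓕 := nhdsWithin (0:ℝ) (Set.Ioi 0))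
        (f := fun a i => a^2*lam i*(yCoeff lam xdag i)^2/(lam i+a)^4)
        (g := fun _ => (0:ℝ)) (bound := fun i => xdag i ^ 2) hSX hab hbd
      simpa [tsum_zero] using this
    have hev1 : ∀ᶠ a in nhdsWithin (0:ℝ) (Set.Ioi 0),
        psiQOsq lam (yCoeff lam xdag) a < c2*β^2 :=
      hT.eventually_lt_const (by positivity)
    have hev2 : ∀ᶠ a in nhdsWithin (0:ℝ) (Set.Ioi 0), a ∈ Set.Ioo (0:ℝ) Λ :=
      Ioo_mem_nhdsGT_of_mem ⟨le_refl 0, hΛ⟩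
    obtain ⟨a, ha1, ha2⟩ := (hev1.and hev2).exists
    have hsq := hmin' a ha2
    rw [heq β, heq a] at hsq
    have hlow := hFlow β hβ0 hβΛ.le
    linarith only [hlow, hsq, ha1]
  · -- main case
    have hEpos : 0 < etaSq lam e p := lt_of_le_of_ne hEsq0 (Ne.symm hz)
    have hη : 0 < η := Real.sqrt_pos.mpr hEpos
    have hη1 : η ≤ 1 := le_trans hsmall (min_le_left _ _)
    set aop := η ^ ((2:ℝ)/d) with haop
    have haop0 : 0 < aop := Real.rpow_pos_of_pos hη _
    have haopΛ : aop < Λ := by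
      have h1 : η ≤ (Λ/2) ^ (d/2) := hsmall.trans (min_le_right _ _)
      have h2 : aop ≤ ((Λ/2) ^ (d/2)) ^ ((2:ℝ)/d) := by
        rw [haop]
        exact Real.rpow_le_rpow hη0 h1 (by positivity)
      have h3 : (((Λ/2) ^ (d/2) : ℝ)) ^ ((2:ℝ)/d) = Λ/2 := by
        rw [← Real.rpow_mul (by linarith only [hΛ] : (0:ℝ) ≤ Λ/2),
          show d/2*(2/d) = 1 by field_simp, Real.rpow_one]
      rw [h3] at h2
      linarith only [h2, hΛ]
    set r := 2*μ/d with hr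
    have hr0 : 0 ≤ r := by rw [hr]; exact div_nonneg (by linarith only [hμ0]) hd0.le
    have hA1 : aop ^ (-(1+2*p)) * etaSq lam e p = η ^ (2*r) := by
      rw [hEs, haop, ← Real.rpow_mul hη0, ← rpow_two', ← Real.rpow_add hη]
      congr 1
      rw [hr, hd]
      field_simp
      ring
    have hA2 : aop ^ (2*μ) = η ^ (2*r) := by
      rw [haop, ← Real.rpow_mul hη0]
      congr 1
      rw [hr]
      ring
    have hmin2 := hmin' aop ⟨haop0, haopΛ⟩
    have hstar : psiQOsq lam (ydCoeff lam xdag e) β ≤ K1 * η^(2*r) := by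
      calc psiQOsq lam (ydCoeff lam xdag e) β
          ≤ psiQOsq lam (ydCoeff lam xdag e) aop := hmin2
      _ ≤ 2*psiQOsq lam (yCoeff lam xdag) aop + 2*psiQOsq lam e aop :=
          hpsiTri aop haop0 _ _ _ k1 (hYt aop haop0) (hEt aop haop0)
      _ ≤ 2*(aop^(2*μ)*W) + 2*(aop^(-(1+2*p))*etaSq lam e p) := by
          have h4 := hYle aop haop0
          have h5 := hEle aop haop0
          linarith only [h4, h5]
      _ = K1 * η^(2*r) := by rw [hA2, hA1, hK1]; ring
    -- noise condition : data error controlled by ψ_e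
    have hEC : dataErrSq lam e β ≤ CE * psiQOsq lam e β := by
      have hg1s : Summable (fun i => if lam i ≤ β then lam i*e i^2/(lam i+β)^2 else 0) := by
        apply (hDsum β hβ0).of_nonneg_of_le
        · intro i; split_ifs with h
          · have := (hl i).le; positivity
          · exact le_refl 0
        · intro i; split_ifs with h
          · exact le_refl _
          · have := (hl i).le; positivity
      have hg2s : Summable (fun i => if lam i ≤ β then 0 else lam i*e i^2/(lam i+β)^2) := by
        apply (hDsum β hβ0).of_nonneg_of_le
        · intro i; split_ifs with h
          · exact le_refl 0
          · have := (hl i).le; positivity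
        · intro i; split_ifs with h
          · have := (hl i).le; positivity
          · exact le_refl _
      have hHs : Summable (fun i => if β < lam i then e i^2/lam i else 0) := by
        apply (hMe β).of_nonneg_of_le
        · intro i; split_ifs with h
          · have := (hl i).le; positivity
          · exact le_refl 0
        · intro i; split_ifs with h
          · exact P5 (hl i) hβ0 h hp0 (sq_nonneg _)
          · have := (hl i).le; positivity
      set L := ∑' i, (if lam i ≤ β then lam i*e i^2/(lam i+β)^2 else 0) with hLdef
      have hL0 : 0 ≤ L := tsum_nonneg fun i => by
        split_ifs with h
        · have := (hl i).le; positivity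
        · exact le_refl 0
      have hsplit : dataErrSq lam e β
          = L + ∑' i, (if lam i ≤ β then 0 else lam i*e i^2/(lam i+β)^2) := by
        simp only [dataErrSq]
        rw [hLdef, ← Summable.tsum_add hg1s hg2s]
        exact tsum_congr fun i => by split_ifs <;> ring
      have hhigh : (∑' i, (if lam i ≤ β then 0 else lam i*e i^2/(lam i+β)^2))
          ≤ ∑' i, (if β < lam i then e i^2/lam i else 0) := by
        apply tsum_mono' _ _ hHs
        · intro i; split_ifs with h
          · exact le_refl 0
          · have := (hl i).le; positivity
        · intro i
          by_cases h : lam i ≤ β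
          · rw [if_pos h, if_neg (not_lt.mpr h)]
          · rw [if_neg h, if_pos (not_le.mp h)]
            rw [div_le_div_iff₀ (by have := (hl i).le; positivity) (hl i)]
            nlinarith only [mul_le_mul_of_nonneg_right
              (show lam i^2 ≤ (lam i+β)^2 by nlinarith only [hl i, hβ0]) (sq_nonneg (e i))]
      have hnc := hnoise β ⟨hβ0, hβΛ⟩
      simp only [Real.rpow_one] at hnc
      rw [show ((1:ℝ)+1) = (2:ℝ) by norm_num, rpow_two'] at hnc
      have hL1 : (∑' i, (if lam i ≤ β then lam i*e i^2 else 0)) ≤ 4*β^2*L := by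
        rw [hLdef, ← tsum_mul_left]
        apply tsum_mono' _ _ (hg1s.mul_left (4*β^2))
        · intro i; split_ifs with h
          · have := (hl i).le; positivity
          · exact le_refl 0
        · intro i
          by_cases h : lam i ≤ β
          · rw [if_pos h, if_pos h, ← mul_div_assoc, le_div_iff₀ (by have := (hl i).le; positivity)]
            nlinarith only [mul_le_mul_of_nonneg_right
              (show (lam i+β)^2 ≤ 4*β^2 by nlinarith only [hl i, hβ0, h])
              (show (0:ℝ) ≤ lam i*e i^2 by have := (hl i).le; positivity)]
          · rw [if_neg h, if_neg h, mul_zero]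
      have hL2 : L ≤ 4 * psiQOsq lam e β := by
        rw [hLdef]
        calc (∑' i, (if lam i ≤ β then lam i*e i^2/(lam i+β)^2 else 0))
            ≤ ∑' i, 4*(β^2*lam i*e i^2/(lam i+β)^4) := by
              apply tsum_mono' _ _ ((hEt β hβ0).mul_left 4)
              · intro i; split_ifs with h
                · have := (hl i).le; positivity
                · exact le_refl 0
              · intro i
                by_cases h : lam i ≤ β
                · rw [if_pos h, ← mul_div_assoc,
                    div_le_div_iff₀ (by have := (hl i).le; positivity)
                      (by have := (hl i).le; positivity)]
                  nlinarith only [mul_le_mul_of_nonneg_right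
                    (show (lam i+β)^2 ≤ 4*β^2 by nlinarith only [hl i, hβ0, h])
                    (show (0:ℝ) ≤ lam i*e i^2*(lam i+β)^2 by have := (hl i).le; positivity)]
                · rw [if_neg h]
                  have := (hl i).le; positivity
        _ = 4 * psiQOsq lam e β := by simp only [psiQOsq]; rw [tsum_mul_left]
      have hHle : (∑' i, (if β < lam i then e i^2/lam i else 0)) ≤ 4*CN*L := by
        have h6 := mul_le_mul_of_nonneg_left hL1 hCN.le
        have h5 : β^2*(∑' i, (if β < lam i then e i^2/lam i else 0)) ≤ β^2*(4*CN*L) := by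
          linarith only [hnc, h6]
        exact (mul_le_mul_iff_right₀ (pow_pos hβ0 2)).mp h5
      rw [hsplit, hCE]
      have m1 := mul_le_mul_of_nonneg_left hL2 (show (0:ℝ) ≤ 1+4*CN by linarith only [hCN])
      linarith only [hhigh, hHle, m1, hL0]
    -- upper bound for the minimizer
    have hηr0 : 0 ≤ η ^ r := Real.rpow_nonneg hη0 _
    have hβle : β ≤ C3 * η ^ r := by
      rcases le_or_gt β aop with hc | hc
      · have h1 : aop ≤ η ^ r := by
          rw [haop, hr]
          exact Real.rpow_le_rpow_of_exponent_ge hη hη1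
            (div_le_div_of_nonneg_right (show 2*μ ≤ 2 by linarith only [hμ1]) hd0.le)
        calc β ≤ aop := hc
        _ ≤ η ^ r := h1
        _ ≤ C3 * η ^ r := le_mul_of_one_le_left hηr0 hC31
      · have hψy := hFlow β hβ0 hβΛ.le
        have htri2 : psiQOsq lam (yCoeff lam xdag) β
            ≤ 2*psiQOsq lam (ydCoeff lam xdag e) β + 2*psiQOsq lam e β :=
          hpsiTri β hβ0 _ _ _ k3 (hYdsum β hβ0) (hEt β hβ0)
        have hbd : psiQOsq lam e β ≤ η^(2*r) := by
          calc psiQOsq lam e β ≤ β^(-(1+2*p)) * etaSq lam e p := hEle β hβ0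
          _ ≤ aop^(-(1+2*p)) * etaSq lam e p := mul_le_mul_of_nonneg_right
              (Real.rpow_le_rpow_of_nonpos haop0 hc.le (by linarith only [hp0])) hEsq0
          _ = η^(2*r) := hA1
        have hkey : c2*β^2 ≤ (2*K1+2) * η^(2*r) := by linarith only [hψy, htri2, hstar, hbd]
        have hr2 : η^(2*r) = (η^r)^2 := by
          rw [show (2:ℝ)*r = r*2 by ring, Real.rpow_mul hη0, rpow_two']
        have hb2 : β^2 ≤ (2*K1+2)/c2 * (η^r)^2 := by
          rw [div_mul_eq_mul_div, le_div_iff₀ hc2, ← hr2]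
          linarith only [hkey]
        have hnn : (0:ℝ) ≤ (2*K1+2)/c2 := div_nonneg (by linarith only [hK10]) hc2.le
        calc β = Real.sqrt (β^2) := (Real.sqrt_sq hβ0.le).symm
        _ ≤ Real.sqrt ((2*K1+2)/c2 * (η^r)^2) := Real.sqrt_le_sqrt hb2
        _ = Real.sqrt ((2*K1+2)/c2) * (η^r) := by
            rw [Real.sqrt_mul hnn, Real.sqrt_sq hηr0]
        _ ≤ C3 * η^r := mul_le_mul_of_nonneg_right (le_max_right _ _) hηr0
    have hβμ : β^(2*μ) ≤ C3^(2*μ) * η^(2*(r*μ)) := by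
      calc β^(2*μ) ≤ (C3*η^r)^(2*μ) := Real.rpow_le_rpow hβ0.le hβle (by linarith only [hμ0])
      _ = C3^(2*μ) * (η^r)^(2*μ) := Real.mul_rpow (by linarith only [hC31]) hηr0
      _ = C3^(2*μ) * η^(2*(r*μ)) := by
          rw [← Real.rpow_mul hη0, show r*(2*μ) = 2*(r*μ) by ring]
    -- approximation error
    have happSum : Summable (fun i => β^2*xdag i^2/(lam i+β)^2) := by
      apply (hω.mul_left (β^(2*μ))).of_nonneg_of_le
        (fun i => by have := (hl i).le; positivity)
      intro i
      rw [hx2 i]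
      exact P2 (hl i) hβ0 hμ0 hμ1 (sq_nonneg _)
    have happ : approxErrSq lam xdag β ≤ β^(2*μ) * W := by
      simp only [approxErrSq]
      calc (∑' i, β ^ 2 * xdag i ^ 2 / (lam i + β) ^ 2) ≤ ∑' i, β^(2*μ)*ω i^2 :=
          tsum_mono' (fun i => by have := (hl i).le; positivity)
            (fun i => by rw [hx2 i]; exact P2 (hl i) hβ0 hμ0 hμ1 (sq_nonneg _))
            (hω.mul_left _)
      _ = β^(2*μ)*W := tsum_mul_left
    -- total error splitting
    have hTot : totalErrSq lam xdag e β
        ≤ 2*dataErrSq lam e β + 2*approxErrSq lam xdag β := by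
      simp only [totalErrSq, dataErrSq, approxErrSq]
      apply tsum_tri (fun i => by have := (hl i).le; positivity) _ (hDsum β hβ0) happSum
      intro i
      have hD : (0:ℝ) < (lam i+β)^2 := by have := hl i; positivity
      have hnum : (Real.sqrt (lam i)*e i - β*xdag i)^2
          ≤ 2*(lam i*e i^2) + 2*(β^2*xdag i^2) := by
        nlinarith only [sq_nonneg (Real.sqrt (lam i)*e i + β*xdag i), Real.sq_sqrt (hl i).le]
      calc (Real.sqrt (lam i)*e i - β*xdag i)^2/(lam i+β)^2
          ≤ (2*(lam i*e i^2) + 2*(β^2*xdag i^2))/(lam i+β)^2 := pdiv hD hnum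
      _ = 2*(lam i*e i^2/(lam i+β)^2) + 2*(β^2*xdag i^2/(lam i+β)^2) := by ring
    -- put everything together
    have htriE : psiQOsq lam e β
        ≤ 2*psiQOsq lam (ydCoeff lam xdag e) β + 2*psiQOsq lam (yCoeff lam xdag) β :=
      hpsiTri β hβ0 _ _ _ k2 (hYdsum β hβ0) (hYt β hβ0)
    have hyβ : psiQOsq lam (yCoeff lam xdag) β ≤ β^(2*μ)*W := hYle β hβ0
    have hdata : dataErrSq lam e β ≤ CE*(2*K1*η^(2*r) + 2*(β^(2*μ)*W)) := by
      calc dataErrSq lam e β ≤ CE * psiQOsq lam e β := hEC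
      _ ≤ CE*(2*K1*η^(2*r) + 2*(β^(2*μ)*W)) :=
          mul_le_mul_of_nonneg_left (by linarith only [htriE, hstar, hyβ]) hCE0
    have hmono : η^(2*r) ≤ η^(2*(r*μ)) :=
      Real.rpow_le_rpow_of_exponent_ge hη hη1
        (by nlinarith only [mul_nonneg hr0 (show (0:ℝ) ≤ 1-μ by linarith only [hμ1])])
    have hv0 : 0 ≤ η^(2*(r*μ)) := Real.rpow_nonneg hη0 _
    have h6 : β^(2*μ)*W ≤ C3^(2*μ)*η^(2*(r*μ))*W := by
      linarith only [mul_le_mul_of_nonneg_right hβμ hW0]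
    have h7 : CE*(2*K1*η^(2*r) + 2*(β^(2*μ)*W))
        ≤ CE*(2*K1*η^(2*(r*μ)) + 2*(C3^(2*μ)*η^(2*(r*μ))*W)) := by
      apply mul_le_mul_of_nonneg_left _ hCE0
      have h8 : K1*η^(2*r) ≤ K1*η^(2*(r*μ)) := mul_le_mul_of_nonneg_left hmono hK10
      linarith only [h6, h8]
    have hfin : totalErrSq lam xdag e β ≤ CF * η^(2*(r*μ)) := by
      rw [hCF]
      linarith only [hTot, hdata, happ, h6, h7]
    have hsq2 : η^(2*(r*μ)) = (η^(r*μ))^2 := by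
      rw [show 2*(r*μ) = (r*μ)*2 by ring, Real.rpow_mul hη0, rpow_two']
    calc totalErr lam xdag e β = Real.sqrt (totalErrSq lam xdag e β) := by
          simp only [totalErr]
    _ ≤ Real.sqrt (CF * η^(2*(r*μ))) := Real.sqrt_le_sqrt hfin
    _ = Real.sqrt CF * η^(r*μ) := by
        rw [Real.sqrt_mul hCF0.le, hsq2, Real.sqrt_sq (Real.rpow_nonneg hη0 _)]


end WeakNoise
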